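/- Let q₁, …, q_m ∈ K⟨X⟩ each have rank 2 and a₀, …, a_{m−1} ∈ K. Then the polynomial p = q_m q_{m−1} ⋯ q₁ + a_{m−1} q_{m−1} ⋯ q₁ + … + a₂ q₂ q₁ + a₁ q₁ + a₀ has rank(p) = m + 1. -/

import Mathlib

/-- The Hankel rank of `p ∈ K⟨X⟩`. -/
noncomputable def hankelRank {K X : Type*} [Field K]
    (p : MonoidAlgebra K (FreeMonoid X)) : ℕ :=
  Module.finrank K (Submodule.span K
    (Set.range (fun w₁ : FreeMonoid X => (fun w₂ : FreeMonoid X => p.coeff (w₁ * w₂)))))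

/-- `chainProd q n = q_{n} ⋯ q_2 q_1` (with `q i` denoting `q_{i+1}`). -/
def chainProd {R : Type*} [Monoid R] (q : ℕ → R) : ℕ → R
  | 0 => 1
  | n + 1 => q n * chainProd q (n)

section Aux

open FreeMonoid MonoidAlgebra

variable {K X : Type*} [Field K]

instance instCoeFunMA {M : Type*} : CoeFun (MonoidAlgebra K M) (fun _ => M → K) :=
  ⟨fun p => p.coeff⟩

/-- Triangular families are linearly independent. -/
theorem linearIndependent_of_triangular {n : ℕ} {β : Type*}
    (f : Fin n → (β → K)) (e : Fin n → β)
    (hd : ∀ j, f j (e j) ≠ 0) (hu : ∀ i j : Fin n, i < j → f i (e j) = 0) :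
    LinearIndependent K f := by
  rw [Fintype.linearIndependent_iff]
  intro c hc
  have key : ∀ t : ℕ, ∀ j : Fin n, n ≤ (j : ℕ) + t → c j = 0 := by
    intro t
    induction t with
    | zero => intro j hj; exact absurd hj (by simpa using j.2)
    | succ t ih =>
      intro j hj
      by_cases h : n ≤ (j : ℕ) + t
      · exact ih j h
      have hcongr := congrFun hc (e j)
      simp only [Finset.sum_apply, Pi.smul_apply, smul_eq_mul, Pi.zero_apply] at hcongr
      have hsum : ∑ i, c i * f i (e j) = c j * f j (e j) := by
        refine Finset.sum_eq_single j (fun i _ hij => ?_) (by simp)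
        rcases lt_or_gt_of_ne hij with hlt | hgt
        · rw [hu i j hlt, mul_zero]
        · rw [ih i (by omega), zero_mul]
      rw [hsum] at hcongr
      exact (mul_eq_zero.mp hcongr).resolve_right (hd j)
  intro j; exact key n j (by omega)

theorem ma_sub_apply (f g : MonoidAlgebra K (FreeMonoid X)) (w : FreeMonoid X) :
    (f - g) w = f w - g w := Finsupp.sub_apply f.coeff g.coeff w

theorem ma_add_apply (f g : MonoidAlgebra K (FreeMonoid X)) (w : FreeMonoid X) :
    (f + g) w = f w + g w := Finsupp.add_apply f.coeff g.coeff w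

theorem ma_smul_apply (c : K) (f : MonoidAlgebra K (FreeMonoid X)) (w : FreeMonoid X) :
    (c • f) w = c * f w := Finsupp.smul_apply c f.coeff w

theorem ma_sum_apply {ι : Type*} (s : Finset ι) (f : ι → MonoidAlgebra K (FreeMonoid X))
    (w : FreeMonoid X) : (∑ i ∈ s, f i) w = ∑ i ∈ s, f i w :=
  by rw [MonoidAlgebra.coeff_sum, Finsupp.finset_sum_apply]

open scoped Classical in
theorem ma_one_apply (w : FreeMonoid X) :
    (1 : MonoidAlgebra K (FreeMonoid X)) w = if w = 1 then 1 else 0 := by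
  rw [MonoidAlgebra.one_def, MonoidAlgebra.single_apply]
  by_cases h : w = 1 <;> simp [h, eq_comm]

/-- Key multiplication formula: if `g` is supported on words of length `≤ 1`, then
`(g * r)(x·u) = g(1) r(x·u) + g(x) r(u)`. -/
theorem mul_apply_cons (g : MonoidAlgebra K (FreeMonoid X))
    (hg : ∀ w : FreeMonoid X, 2 ≤ w.length → g w = 0)
    (r : MonoidAlgebra K (FreeMonoid X)) (x : X) (u : FreeMonoid X) :
    (g * r) (FreeMonoid.of x * u)
      = g 1 * r (FreeMonoid.of x * u) + g (FreeMonoid.of x) * r u := by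
  classical
  set w : FreeMonoid X := FreeMonoid.of x * u with hw
  set g' : MonoidAlgebra K (FreeMonoid X) :=
    g - (MonoidAlgebra.single 1 (g 1) + MonoidAlgebra.single (FreeMonoid.of x) (g (FreeMonoid.of x))) with hg'
  have hdecomp : g = MonoidAlgebra.single 1 (g 1)
      + MonoidAlgebra.single (FreeMonoid.of x) (g (FreeMonoid.of x)) + g' := by
    rw [hg', add_sub_cancel]
  have hzero : (g' * r) w = 0 := by
    rw [MonoidAlgebra.mul_apply]
    refine Finset.sum_eq_zero fun a ha => Finset.sum_eq_zero fun b hb => ?_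
    rw [ite_eq_right_iff]
    intro hab
    exfalso
    -- a ∈ g'.support : a ≠ 1, a ≠ of x, length a ≤ 1
    have ha' : g' a ≠ 0 := Finsupp.mem_support_iff.mp ha
    have hof1 : FreeMonoid.of x ≠ (1 : FreeMonoid X) := by
      intro h
      have := congrArg FreeMonoid.length h
      simp [FreeMonoid.length_of, FreeMonoid.length_one] at this
    have h1 : a ≠ 1 := by
      rintro rfl
      classical simp [hg', ma_sub_apply, ma_add_apply, MonoidAlgebra.single_apply, hof1] at ha'
    have h2 : a ≠ FreeMonoid.of x := by
      rintro rfl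
      classical simp [hg', ma_sub_apply, ma_add_apply, MonoidAlgebra.single_apply, Ne.symm hof1] at ha'
    have h3 : a.length ≤ 1 := by
      by_contra h
      apply ha'
      have hga : g a = 0 := hg a (by omega)
      classical simp [hg', ma_sub_apply, ma_add_apply, MonoidAlgebra.single_apply, hga,
        Ne.symm h1, Ne.symm h2]
    -- so a = of y with y ≠ x
    have h4 : a.length = 1 := by
      rcases Nat.lt_or_ge a.length 1 with h | h
      · exact absurd (FreeMonoid.length_eq_zero.mp (by omega)) h1
      · omega
    obtain ⟨y, rfl⟩ := FreeMonoid.length_eq_one.mp h4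
    have hy : y ≠ x := fun h => h2 (by rw [h])
    have := congrArg FreeMonoid.toList hab
    rw [FreeMonoid.toList_mul, FreeMonoid.toList_of, hw, FreeMonoid.toList_of_mul] at this
    exact hy (List.head_eq_of_cons_eq this)
  have h1r : (MonoidAlgebra.single (1 : FreeMonoid X) (g 1) * r) w = g 1 * r w :=
    MonoidAlgebra.single_one_mul_apply r (g 1) w
  have hxr : (MonoidAlgebra.single (FreeMonoid.of x) (g (FreeMonoid.of x)) * r) w
      = g (FreeMonoid.of x) * r u := by
    refine MonoidAlgebra.single_mul_apply_aux u fun a _ => ?_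
    constructor
    · intro h; exact mul_left_cancel h
    · rintro rfl; rfl
  conv_lhs => rw [hdecomp]
  rw [add_mul, add_mul, ma_add_apply, ma_add_apply, h1r, hxr, hzero, add_zero]

theorem freeMonoid_cons_of_length_pos (w : FreeMonoid X) (h : 0 < w.length) :
    ∃ (x : X) (u : FreeMonoid X), w = FreeMonoid.of x * u := by
  cases hw : FreeMonoid.toList w with
  | nil =>
    exfalso
    have : w = 1 := by
      rw [← FreeMonoid.ofList_toList w, hw]; rfl
    rw [this, FreeMonoid.length_one] at h; omega
  | cons x l =>
    exact ⟨x, FreeMonoid.ofList l, by rw [← FreeMonoid.ofList_toList w, hw]; rfl⟩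

theorem chainProd_apply_eq_zero {q : ℕ → MonoidAlgebra K (FreeMonoid X)} {n : ℕ}
    (hdeg : ∀ i < n, ∀ w : FreeMonoid X, 2 ≤ w.length → q i w = 0)
    (w : FreeMonoid X) (hw : n < w.length) : chainProd q n w = 0 := by
  induction n generalizing w with
  | zero =>
    have : w ≠ 1 := fun h => by rw [h, FreeMonoid.length_one] at hw; omega
    classical
    rw [show chainProd q 0 = 1 from rfl, ma_one_apply, if_neg this]
  | succ n ih =>
    obtain ⟨x, u, rfl⟩ := freeMonoid_cons_of_length_pos w (by omega)
    have hlen : (FreeMonoid.of x * u).length = 1 + u.length := by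
      rw [FreeMonoid.length_mul, FreeMonoid.length_of]
    have hdeg' : ∀ i < n, ∀ w : FreeMonoid X, 2 ≤ w.length → q i w = 0 :=
      fun i hi => hdeg i (by omega)
    rw [show chainProd q (n+1) = q n * chainProd q n from rfl,
      mul_apply_cons (q n) (hdeg n (by omega)) _ x u,
      ih hdeg' _ (by omega), ih hdeg' _ (by omega), mul_zero, mul_zero, add_zero]

def chainWord (xs : ℕ → X) : ℕ → FreeMonoid X
  | 0 => 1
  | n + 1 => FreeMonoid.of (xs n) * chainWord xs (n)

theorem chainWord_length (xs : ℕ → X) (n : ℕ) : (chainWord xs n).length = n := by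
  induction n with
  | zero => rfl
  | succ n ih =>
    rw [show chainWord xs (n+1) = FreeMonoid.of (xs n) * chainWord xs n from rfl,
      FreeMonoid.length_mul, FreeMonoid.length_of, ih]; omega

theorem chainProd_chainWord_ne_zero {q : ℕ → MonoidAlgebra K (FreeMonoid X)}
    {xs : ℕ → X} {n : ℕ}
    (hdeg : ∀ i < n, ∀ w : FreeMonoid X, 2 ≤ w.length → q i w = 0)
    (hx : ∀ i < n, q i (FreeMonoid.of (xs i)) ≠ 0) :
    chainProd q n (chainWord xs n) ≠ 0 := by
  induction n with
  | zero =>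
    classical
    rw [show chainProd q 0 = 1 from rfl, show chainWord xs 0 = 1 from rfl,
      ma_one_apply, if_pos rfl]
    exact one_ne_zero
  | succ n ih =>
    rw [show chainProd q (n+1) = q n * chainProd q n from rfl,
      show chainWord xs (n+1) = FreeMonoid.of (xs n) * chainWord xs n from rfl,
      mul_apply_cons (q n) (hdeg n (by omega)) _ (xs n) (chainWord xs n)]
    have h1 : chainProd q n (FreeMonoid.of (xs n) * chainWord xs n) = 0 := by
      refine chainProd_apply_eq_zero (fun i hi => hdeg i (by omega)) _ ?_
      rw [FreeMonoid.length_mul, FreeMonoid.length_of, chainWord_length]; omega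
    rw [h1, mul_zero, zero_add]
    exact mul_ne_zero (hx n (by omega))
      (ih (fun i hi => hdeg i (by omega)) (fun i hi => hx i (by omega)))

/-- Left shift operator on functions. -/
def shiftL (w : FreeMonoid X) : (FreeMonoid X → K) →ₗ[K] (FreeMonoid X → K) :=
  LinearMap.funLeft K K (fun v => w * v)

theorem shiftL_apply (w : FreeMonoid X) (f : FreeMonoid X → K) (v : FreeMonoid X) :
    shiftL w f v = f (w * v) := rfl

theorem shiftL_one (f : FreeMonoid X → K) : shiftL (K := K) (1 : FreeMonoid X) f = f := by
  funext v; rw [shiftL_apply, one_mul]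

theorem shiftL_mul (w₁ w₂ : FreeMonoid X) (f : FreeMonoid X → K) :
    shiftL (w₁ * w₂) f = shiftL w₂ (shiftL w₁ f) := by
  funext v; rw [shiftL_apply, shiftL_apply, shiftL_apply, mul_assoc]

theorem of_mul_ne_one (x : X) (v : FreeMonoid X) : FreeMonoid.of x * v ≠ 1 := by
  intro h
  have := congrArg FreeMonoid.length h
  rw [FreeMonoid.length_mul, FreeMonoid.length_of, FreeMonoid.length_one] at this
  omega

theorem shift_chainProd_mem {q : ℕ → MonoidAlgebra K (FreeMonoid X)} {n : ℕ}
    (hdeg : ∀ i < n, ∀ w : FreeMonoid X, 2 ≤ w.length → q i w = 0) (x : X) :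
    shiftL (FreeMonoid.of x) (⇑(chainProd q n) : FreeMonoid X → K) ∈
      Submodule.span K ((fun i => (⇑(chainProd q i) : FreeMonoid X → K)) '' Set.Iio n) := by
  induction n with
  | zero =>
    have h0 : shiftL (FreeMonoid.of x) (⇑(chainProd q 0) : FreeMonoid X → K) = 0 := by
      funext v
      rw [shiftL_apply, show chainProd q 0 = 1 from rfl]
      classical
      rw [ma_one_apply, if_neg (of_mul_ne_one x v)]; rfl
    rw [h0]; exact zero_mem _
  | succ n ih =>
    have heq : shiftL (FreeMonoid.of x) (⇑(chainProd q (n+1)) : FreeMonoid X → K)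
        = q n 1 • shiftL (FreeMonoid.of x) (⇑(chainProd q n) : FreeMonoid X → K)
          + q n (FreeMonoid.of x) • (⇑(chainProd q n) : FreeMonoid X → K) := by
      funext v
      rw [Pi.add_apply, Pi.smul_apply, Pi.smul_apply, smul_eq_mul, smul_eq_mul,
        shiftL_apply, shiftL_apply,
        show chainProd q (n+1) = q n * chainProd q n from rfl,
        mul_apply_cons (q n) (hdeg n (by omega)) _ x v]
    rw [heq]
    refine add_mem (Submodule.smul_mem _ _ ?_) (Submodule.smul_mem _ _ ?_)
    · exact Submodule.span_mono
        (Set.image_mono (Set.Iio_subset_Iio (by omega)))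
        (ih (fun i hi => hdeg i (by omega)))
    · exact Submodule.subset_span ⟨n, by simp, rfl⟩

theorem shift_mem_span_Iic {q : ℕ → MonoidAlgebra K (FreeMonoid X)} {m : ℕ}
    (hdeg : ∀ i < m, ∀ w : FreeMonoid X, 2 ≤ w.length → q i w = 0)
    (w : FreeMonoid X) (f : FreeMonoid X → K)
    (hf : f ∈ Submodule.span K
      ((fun i => (⇑(chainProd q i) : FreeMonoid X → K)) '' Set.Iic m)) :
    shiftL w f ∈ Submodule.span K
      ((fun i => (⇑(chainProd q i) : FreeMonoid X → K)) '' Set.Iic m) := by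
  set U := Submodule.span K
    ((fun i => (⇑(chainProd q i) : FreeMonoid X → K)) '' Set.Iic m) with hU
  have hx : ∀ (x : X) (g : FreeMonoid X → K), g ∈ U → shiftL (FreeMonoid.of x) g ∈ U := by
    intro x g hg
    refine Submodule.span_induction ?_ ?_ ?_ ?_ hg
    · rintro _ ⟨i, hi, rfl⟩
      have hi' : i ≤ m := Set.mem_Iic.mp hi
      have hsub : Set.Iio i ⊆ Set.Iic m := fun t ht => le_trans (le_of_lt (Set.mem_Iio.mp ht)) hi'
      exact Submodule.span_mono (Set.image_mono hsub)
        (shift_chainProd_mem (fun j hj => hdeg j (lt_of_lt_of_le hj hi')) x)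
    · rw [map_zero]; exact zero_mem _
    · intro u v _ _ hu hv; rw [map_add]; exact add_mem hu hv
    · intro c u _ hu; rw [map_smul]; exact Submodule.smul_mem _ _ hu
  induction w using FreeMonoid.recOn generalizing f with
  | one => rw [shiftL_one]; exact hf
  | of_mul x xs ih' => rw [shiftL_mul]; exact ih' _ (hx x f hf)

theorem hankelSpan_stable (p : MonoidAlgebra K (FreeMonoid X)) (x : X)
    (f : FreeMonoid X → K)
    (hf : f ∈ Submodule.span K
      (Set.range (fun w₁ : FreeMonoid X => (fun w₂ : FreeMonoid X => p (w₁ * w₂))))) :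
    shiftL (FreeMonoid.of x) f ∈ Submodule.span K
      (Set.range (fun w₁ : FreeMonoid X => (fun w₂ : FreeMonoid X => p (w₁ * w₂)))) := by
  refine Submodule.span_induction ?_ ?_ ?_ ?_ hf
  · rintro _ ⟨w₁, rfl⟩
    exact Submodule.subset_span
      ⟨w₁ * FreeMonoid.of x, shiftL_mul w₁ (FreeMonoid.of x) ⇑p⟩
  · rw [map_zero]; exact zero_mem _
  · intro u v _ _ hu hv; rw [map_add]; exact add_mem hu hv
  · intro c u _ hu; rw [map_smul]; exact Submodule.smul_mem _ _ hu

theorem chainProd_mem_hankelSpan {q : ℕ → MonoidAlgebra K (FreeMonoid X)} {m : ℕ}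
    {xs : ℕ → X} {a : ℕ → K}
    (hdeg : ∀ i < m, ∀ w : FreeMonoid X, 2 ≤ w.length → q i w = 0)
    (hx : ∀ i < m, q i (FreeMonoid.of (xs i)) ≠ 0)
    (p : MonoidAlgebra K (FreeMonoid X))
    (hp : (⇑p : FreeMonoid X → K) = ⇑(chainProd q m)
      + ∑ i ∈ Finset.range m, a i • (⇑(chainProd q i) : FreeMonoid X → K)) :
    ∀ j ≤ m, (⇑(chainProd q j) : FreeMonoid X → K) ∈ Submodule.span K
      (Set.range (fun w₁ : FreeMonoid X => (fun w₂ : FreeMonoid X => p (w₁ * w₂)))) := by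
  set H := Submodule.span K
    (Set.range (fun w₁ : FreeMonoid X => (fun w₂ : FreeMonoid X => p (w₁ * w₂)))) with hH
  -- Step 1: downward induction producing `Q̂ j` up to lower-order corrections.
  have step1 : ∀ j ≤ m, ∃ r ∈ Submodule.span K
      ((fun i => (⇑(chainProd q i) : FreeMonoid X → K)) '' Set.Iio j),
      (⇑(chainProd q j) : FreeMonoid X → K) + r ∈ H := by
    intro j hj
    refine Nat.decreasingInduction'
      (P := fun j => ∃ r ∈ Submodule.span K
        ((fun i => (⇑(chainProd q i) : FreeMonoid X → K)) '' Set.Iio j),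
        (⇑(chainProd q j) : FreeMonoid X → K) + r ∈ H)
      (fun j hjm _ ih => ?step) hj ?self
    case self =>
      refine ⟨∑ i ∈ Finset.range m, a i • (⇑(chainProd q i) : FreeMonoid X → K), ?_, ?_⟩
      · refine Submodule.sum_mem _ fun i hi => Submodule.smul_mem _ _ ?_
        exact Submodule.subset_span ⟨i, Finset.mem_range.mp hi, rfl⟩
      · rw [← hp]
        refine Submodule.subset_span ⟨1, ?_⟩
        funext v; show p (1 * v) = p v; rw [one_mul]
    case step =>
      obtain ⟨r, hr, hrH⟩ := ih
      set c := q j (FreeMonoid.of (xs j)) with hc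
      have hcne : c ≠ 0 := hx j hjm
      set S := shiftL (K := K) (FreeMonoid.of (xs j)) with hS
      have heq : S (⇑(chainProd q (j+1)) : FreeMonoid X → K)
          = q j 1 • S (⇑(chainProd q j) : FreeMonoid X → K)
            + c • (⇑(chainProd q j) : FreeMonoid X → K) := by
        funext v
        rw [Pi.add_apply, Pi.smul_apply, Pi.smul_apply, smul_eq_mul, smul_eq_mul, hS,
          shiftL_apply, shiftL_apply,
          show chainProd q (j+1) = q j * chainProd q j from rfl,
          mul_apply_cons (q j) (hdeg j hjm) _ (xs j) v]
      set r' : FreeMonoid X → K :=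
        c⁻¹ • (q j 1 • S (⇑(chainProd q j) : FreeMonoid X → K) + S r) with hr'
      have hr'mem : r' ∈ Submodule.span K
          ((fun i => (⇑(chainProd q i) : FreeMonoid X → K)) '' Set.Iio j) := by
        refine Submodule.smul_mem _ _ (add_mem (Submodule.smul_mem _ _ ?_) ?_)
        · exact shift_chainProd_mem (fun i hi => hdeg i (by omega)) (xs j)
        · refine Submodule.span_induction ?_ ?_ ?_ ?_ hr
          · rintro _ ⟨i, hi, rfl⟩
            have hi0 : i < j + 1 := hi
            have hi' : i ≤ j := by omega
            have := shift_chainProd_mem (q := q) (n := i)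
              (fun t ht => hdeg t (by omega)) (xs j)
            exact Submodule.span_mono
              (Set.image_mono (Set.Iio_subset_Iio hi')) this
          · rw [map_zero]; exact zero_mem _
          · intro u v _ _ hu hv; rw [map_add]; exact add_mem hu hv
          · intro k u _ hu; rw [map_smul]; exact Submodule.smul_mem _ _ hu
      refine ⟨r', hr'mem, ?_⟩
      have hkey : (⇑(chainProd q j) : FreeMonoid X → K) + r'
          = c⁻¹ • S ((⇑(chainProd q (j+1)) : FreeMonoid X → K) + r) := by
        rw [map_add, heq, hr']
        rw [smul_add, smul_add, smul_add, smul_smul c⁻¹ c, inv_mul_cancel₀ hcne, one_smul]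
        abel
      rw [hkey]
      exact Submodule.smul_mem _ _ (hankelSpan_stable p (xs j) _ hrH)
  -- Step 2: upward strong induction removing the corrections.
  intro j hj
  induction j using Nat.strong_induction_on with
  | _ j ihs =>
    obtain ⟨r, hr, hrH⟩ := step1 j hj
    have hrmem : r ∈ H := by
      refine Submodule.span_le.mpr ?_ hr
      rintro _ ⟨i, hi, rfl⟩
      exact ihs i (Set.mem_Iio.mp hi) (le_trans (le_of_lt (Set.mem_Iio.mp hi)) hj)
    have : (⇑(chainProd q j) : FreeMonoid X → K)
        = ((⇑(chainProd q j) : FreeMonoid X → K) + r) - r := by abel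
    rw [this]
    exact sub_mem hrH hrmem

theorem rank2_deg {g : MonoidAlgebra K (FreeMonoid X)} (hrank : hankelRank g = 2) :
    ∀ w : FreeMonoid X, 2 ≤ w.length → g w = 0 := by
  intro w0 hlen
  by_contra hne
  have hsupp : w0 ∈ g.coeff.support := Finsupp.mem_support_iff.mpr hne
  obtain ⟨wmax, hwmem, hmax⟩ :=
    Finset.exists_max_image g.coeff.support FreeMonoid.length ⟨w0, hsupp⟩
  set d := wmax.length with hd
  have hd2 : 2 ≤ d := le_trans hlen (hmax w0 hsupp)
  have hzero : ∀ u : FreeMonoid X, d < u.length → g u = 0 := by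
    intro u hu
    by_contra h
    have := hmax u (Finsupp.mem_support_iff.mpr h)
    omega
  set L := FreeMonoid.toList wmax with hL
  have hLlen : L.length = d := rfl
  set f : Fin (d+1) → (FreeMonoid X → K) :=
    fun k => fun v => g (FreeMonoid.ofList (L.take (d - k)) * v) with hf
  set e : Fin (d+1) → FreeMonoid X :=
    fun k => FreeMonoid.ofList (L.drop (d - k)) with he
  have hdiag : ∀ k, f k (e k) ≠ 0 := by
    intro k
    have : FreeMonoid.ofList (L.take (d - k)) * FreeMonoid.ofList (L.drop (d - k)) = wmax := by
      show FreeMonoid.ofList (L.take (d - k) ++ L.drop (d - k)) = wmax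
      rw [List.take_append_drop]
      exact FreeMonoid.ofList_toList wmax
    rw [hf, he]
    simp only
    rw [this]
    exact Finsupp.mem_support_iff.mp hwmem
  have htri : ∀ i j : Fin (d+1), i < j → f i (e j) = 0 := by
    intro i j hij
    refine hzero _ ?_
    have h1 : (FreeMonoid.ofList (L.take (d - i)) * FreeMonoid.ofList (L.drop (d - j))).length
        = (L.take (d - i)).length + (L.drop (d - j)).length := FreeMonoid.length_mul _ _
    rw [h1, List.length_take, List.length_drop, hLlen]
    have hi := i.2
    have hj := j.2
    have hij' : (i : ℕ) < (j : ℕ) := hij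
    omega
  have hli := linearIndependent_of_triangular f e hdiag htri
  set H := Submodule.span K
    (Set.range (fun w₁ : FreeMonoid X => (fun w₂ : FreeMonoid X => g (w₁ * w₂)))) with hH
  have hle : Submodule.span K (Set.range f) ≤ H := by
    refine Submodule.span_le.mpr ?_
    rintro _ ⟨k, rfl⟩
    exact Submodule.subset_span ⟨FreeMonoid.ofList (L.take (d - k)), rfl⟩
  have hfd : FiniteDimensional K H := by
    refine FiniteDimensional.of_finrank_pos ?_
    rw [show Module.finrank K H = hankelRank g from rfl, hrank]; omega
  have h1 : Module.finrank K (Submodule.span K (Set.range f)) = d + 1 := by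
    rw [finrank_span_eq_card hli, Fintype.card_fin]
  have h2 := Submodule.finrank_mono hle
  rw [h1, show Module.finrank K H = hankelRank g from rfl, hrank] at h2
  omega

theorem rank2_exists {g : MonoidAlgebra K (FreeMonoid X)} (hrank : hankelRank g = 2) :
    ∃ x : X, g (FreeMonoid.of x) ≠ 0 := by
  by_contra hno
  push_neg at hno
  have hall : ∀ w : FreeMonoid X, w ≠ 1 → g w = 0 := by
    intro w hw
    rcases Nat.lt_or_ge w.length 2 with h | h
    · interval_cases h' : w.length
      · exact absurd (FreeMonoid.length_eq_zero.mp h') hw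
      · obtain ⟨x, rfl⟩ := FreeMonoid.length_eq_one.mp h'
        exact hno x
    · exact rank2_deg hrank w h
  set δ : FreeMonoid X → K := ⇑(1 : MonoidAlgebra K (FreeMonoid X)) with hδ
  have hshift : ∀ w₁ : FreeMonoid X,
      (fun w₂ : FreeMonoid X => g (w₁ * w₂)) = g w₁ • δ := by
    intro w₁
    funext v
    classical
    by_cases hv : v = 1
    · subst hv
      rw [Pi.smul_apply, smul_eq_mul, hδ, ma_one_apply, if_pos rfl, mul_one, mul_one]
    · have hne1 : w₁ * v ≠ 1 := by
        intro h
        have := congrArg FreeMonoid.length h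
        rw [FreeMonoid.length_mul, FreeMonoid.length_one] at this
        exact hv (FreeMonoid.length_eq_zero.mp (by omega))
      rw [hall _ hne1, Pi.smul_apply, smul_eq_mul, hδ, ma_one_apply, if_neg hv, mul_zero]
  have hδne : δ ≠ 0 := by
    intro h
    have := congrFun h 1
    classical
    rw [hδ, ma_one_apply, if_pos rfl] at this
    exact one_ne_zero this
  set H := Submodule.span K
    (Set.range (fun w₁ : FreeMonoid X => (fun w₂ : FreeMonoid X => g (w₁ * w₂)))) with hH
  have hle : H ≤ Submodule.span K {δ} := by
    refine Submodule.span_le.mpr ?_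
    rintro _ ⟨w₁, rfl⟩
    exact Submodule.mem_span_singleton.mpr ⟨g w₁, (hshift w₁).symm⟩
  haveI : FiniteDimensional K (Submodule.span K ({δ} : Set (FreeMonoid X → K))) :=
    FiniteDimensional.span_of_finite K (Set.finite_singleton δ)
  have h2 := Submodule.finrank_mono hle
  rw [finrank_span_singleton hδne,
    show Module.finrank K H = hankelRank g from rfl, hrank] at h2
  omega

end Aux

/-- If `q₁, …, q_m` have rank 2 and `a₀, …, a_{m−1}` are scalars, then
`p = q_m⋯q₁ + a_{m−1} q_{m−1}⋯q₁ + … + a₁ q₁ + a₀` has rank `m + 1`. -/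
theorem rank_companion_polynomial {K X : Type*} [Field K]
    (m : ℕ) (q : ℕ → MonoidAlgebra K (FreeMonoid X)) (a : ℕ → K)
    (hq : ∀ i < m, hankelRank (q i) = 2) :
    hankelRank (chainProd q m +
      ∑ i ∈ Finset.range m, a i • chainProd q i) = m + 1 := by
  classical
  set p : MonoidAlgebra K (FreeMonoid X) :=
    chainProd q m + ∑ i ∈ Finset.range m, a i • chainProd q i with hpdef
  have hdeg : ∀ i < m, ∀ w : FreeMonoid X, 2 ≤ w.length → q i w = 0 :=
    fun i hi => rank2_deg (hq i hi)
  have hp : (⇑p : FreeMonoid X → K) = ⇑(chainProd q m)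
      + ∑ i ∈ Finset.range m, a i • (⇑(chainProd q i) : FreeMonoid X → K) := by
    funext w
    rw [hpdef, ma_add_apply, ma_sum_apply, Pi.add_apply, Finset.sum_apply]
    congr 1
  set H := Submodule.span K
    (Set.range (fun w₁ : FreeMonoid X => (fun w₂ : FreeMonoid X => p (w₁ * w₂)))) with hH
  have hrankdef : hankelRank p = Module.finrank K H := rfl
  -- membership of p itself
  have hpH : (⇑p : FreeMonoid X → K) ∈ H := by
    refine Submodule.subset_span ⟨1, ?_⟩
    funext v; show p (1 * v) = p v; rw [one_mul]
  -- the family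
  set g : Fin (m+1) → (FreeMonoid X → K) :=
    fun i => (⇑(chainProd q (i : ℕ)) : FreeMonoid X → K) with hg
  have hrange : Set.range g
      = (fun i => (⇑(chainProd q i) : FreeMonoid X → K)) '' Set.Iic m := by
    ext f
    constructor
    · rintro ⟨j, rfl⟩
      exact ⟨(j : ℕ), Set.mem_Iic.mpr (by have := j.2; omega), rfl⟩
    · rintro ⟨i, hi, rfl⟩
      exact ⟨⟨i, by have : i ≤ m := hi; omega⟩, rfl⟩
  -- upper bound
  have hupper : H ≤ Submodule.span K (Set.range g) := by
    rw [hrange]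
    refine Submodule.span_le.mpr ?_
    rintro _ ⟨w₁, rfl⟩
    have hmem : (⇑p : FreeMonoid X → K) ∈ Submodule.span K
        ((fun i => (⇑(chainProd q i) : FreeMonoid X → K)) '' Set.Iic m) := by
      rw [hp]
      refine add_mem (Submodule.subset_span ⟨m, Set.mem_Iic.mpr le_rfl, rfl⟩) ?_
      refine Submodule.sum_mem _ fun i hi => Submodule.smul_mem _ _
        (Submodule.subset_span
          ⟨i, Set.mem_Iic.mpr (Nat.le_of_lt (Finset.mem_range.mp hi)), rfl⟩)
    exact shift_mem_span_Iic hdeg w₁ ⇑p hmem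
  -- lower bound and independence
  rcases Nat.eq_zero_or_pos m with hm | hm
  · -- m = 0
    subst hm
    have hlower : Submodule.span K (Set.range g) ≤ H := by
      refine Submodule.span_le.mpr ?_
      rintro _ ⟨⟨i, hi⟩, rfl⟩
      interval_cases i
      show (⇑(chainProd q 0) : FreeMonoid X → K) ∈ H
      have hpe : (⇑p : FreeMonoid X → K) = ⇑(chainProd q 0) := by rw [hp]; simp
      rw [← hpe]; exact hpH
    have hli : LinearIndependent K g := by
      refine linearIndependent_of_triangular g (fun _ => (1 : FreeMonoid X)) ?_ ?_
      · intro j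
        show chainProd q (j : ℕ) (1 : FreeMonoid X) ≠ 0
        have hj0 : (j : ℕ) = 0 := by omega
        rw [hj0, show chainProd q 0 = 1 from rfl, ma_one_apply, if_pos rfl]
        exact one_ne_zero
      · intro i j hij
        exact absurd hij (by omega)
    rw [hrankdef, le_antisymm hupper hlower, finrank_span_eq_card hli, Fintype.card_fin]
  · -- m ≥ 1
    have hex : ∀ i, i < m → ∃ x : X, q i (FreeMonoid.of x) ≠ 0 :=
      fun i hi => rank2_exists (hq i hi)
    haveI hne : Nonempty X := ⟨(hex 0 hm).choose⟩
    set xs : ℕ → X := fun i => if h : i < m then (hex i h).choose else Classical.arbitrary X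
      with hxs
    have hx : ∀ i < m, q i (FreeMonoid.of (xs i)) ≠ 0 := by
      intro i hi
      rw [hxs]; simp only [dif_pos hi]
      exact (hex i hi).choose_spec
    have hlower : Submodule.span K (Set.range g) ≤ H := by
      refine Submodule.span_le.mpr ?_
      rintro _ ⟨⟨i, hi⟩, rfl⟩
      exact chainProd_mem_hankelSpan hdeg hx p hp i (by omega)
    have hli : LinearIndependent K g := by
      refine linearIndependent_of_triangular g (fun j => chainWord xs (j : ℕ)) ?_ ?_
      · intro j
        show chainProd q (j : ℕ) (chainWord xs (j : ℕ)) ≠ 0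
        exact chainProd_chainWord_ne_zero
          (fun i hi => hdeg i (by have := j.2; omega))
          (fun i hi => hx i (by have := j.2; omega))
      · intro i j hij
        show chainProd q (i : ℕ) (chainWord xs (j : ℕ)) = 0
        refine chainProd_apply_eq_zero (fun t ht => hdeg t (by have := i.2; omega)) _ ?_
        rw [chainWord_length]
        exact hij
    rw [hrankdef, le_antisymm hupper hlower, finrank_span_eq_card hli, Fintype.card_fin]
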